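/- Fix U ∈ ℝ with U ≠ 0 and fix t ≥ 0. Then there exists a constant C > 0 (depending on U and t) such that for every k > 0 with k⁴ + k³ − U²k ≠ 0, |c̃_−(k)·exp(−i ω_−(k) t) + c̃_+(k)·exp(−i ω_+(k) t)| ≤ C·(1 + k²), where S(k) is the principal complex square root of k⁴ + k³ − U²k, ω_±(k) = (U ± S(k))/(1 + 1/k), and c̃_±(k) = ±(ω_∓(k)² − k⁴)/(ω_−(k)² − ω_+(k)²). -/

import Mathlib

/-- The principal complex square root of `k⁴ + k³ − U²k`. -/
noncomputable def plateS (U k : ℝ) : ℂ :=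
  ((k : ℂ) ^ 4 + (k : ℂ) ^ 3 - (U : ℂ) ^ 2 * (k : ℂ)) ^ ((1 : ℂ) / 2)

/-- The dispersion root `ω₊(k) = (U + S(k))/(1 + 1/k)`. -/
noncomputable def plateOmegaP (U k : ℝ) : ℂ := ((U : ℂ) + plateS U k) / (1 + 1 / (k : ℂ))

/-- The dispersion root `ω₋(k) = (U − S(k))/(1 + 1/k)`. -/
noncomputable def plateOmegaM (U k : ℝ) : ℂ := ((U : ℂ) - plateS U k) / (1 + 1 / (k : ℂ))

/-- The normalised coefficient `c̃₊(k) = (ω₋(k)² − k⁴)/(ω₋(k)² − ω₊(k)²)`. -/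
noncomputable def plateCP (U k : ℝ) : ℂ :=
  (plateOmegaM U k ^ 2 - (k : ℂ) ^ 4) / (plateOmegaM U k ^ 2 - plateOmegaP U k ^ 2)

/-- The normalised coefficient `c̃₋(k) = −(ω₊(k)² − k⁴)/(ω₋(k)² − ω₊(k)²)`. -/
noncomputable def plateCM (U k : ℝ) : ℂ :=
  -((plateOmegaP U k ^ 2 - (k : ℂ) ^ 4) / (plateOmegaM U k ^ 2 - plateOmegaP U k ^ 2))

lemma exp_sub_one_bound (z : ℂ) :
    ‖Complex.exp z - 1‖ ≤ ‖z‖ * Real.exp ‖z‖ := by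
  have hconv : Convex ℝ (Metric.closedBall (0:ℂ) ‖z‖) := convex_closedBall _ _
  have hb : ∀ w ∈ Metric.closedBall (0:ℂ) ‖z‖,
      ‖deriv Complex.exp w‖ ≤ Real.exp ‖z‖ := by
    intro w hw
    rw [Complex.deriv_exp, Complex.norm_exp]
    apply Real.exp_le_exp.2
    calc w.re ≤ ‖w‖ := Complex.re_le_norm w
      _ ≤ ‖z‖ := by simpa [Complex.dist_eq] using hw
  have hmem0 : (0:ℂ) ∈ Metric.closedBall (0:ℂ) ‖z‖ :=
    Metric.mem_closedBall_self (norm_nonneg z)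
  have hmemz : z ∈ Metric.closedBall (0:ℂ) ‖z‖ := by
    simp [Metric.mem_closedBall, Complex.dist_eq]
  have h := hconv.norm_image_sub_le_of_norm_deriv_le
    (f := Complex.exp)
    (fun w _ => Complex.differentiable_exp w) hb hmem0 hmemz
  simpa [Complex.exp_zero, mul_comm] using h

lemma plate_cast (U k : ℝ) : ((k ^ 4 + k ^ 3 - U ^ 2 * k : ℝ) : ℂ)
    = (k : ℂ) ^ 4 + (k : ℂ) ^ 3 - (U : ℂ) ^ 2 * (k : ℂ) := by push_cast; ring

lemma plate_r_ne (U k : ℝ) (hr : k ^ 4 + k ^ 3 - U ^ 2 * k ≠ 0) :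
    ((k : ℂ) ^ 4 + (k : ℂ) ^ 3 - (U : ℂ) ^ 2 * (k : ℂ)) ≠ 0 := by
  rw [← plate_cast]
  exact_mod_cast hr

lemma plateS_sq (U k : ℝ) (hr : k ^ 4 + k ^ 3 - U ^ 2 * k ≠ 0) :
    plateS U k ^ 2 = (k : ℂ) ^ 4 + (k : ℂ) ^ 3 - (U : ℂ) ^ 2 * (k : ℂ) := by
  rw [plateS, sq, ← Complex.cpow_add _ _ (plate_r_ne U k hr)]
  norm_num

lemma plateS_ne (U k : ℝ) (hr : k ^ 4 + k ^ 3 - U ^ 2 * k ≠ 0) : plateS U k ≠ 0 := by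
  intro h
  apply plate_r_ne U k hr
  rw [← plateS_sq U k hr, h]
  ring

lemma plate_absS_sq (U k : ℝ) (hr : k ^ 4 + k ^ 3 - U ^ 2 * k ≠ 0) :
    ‖plateS U k‖ ^ 2 = |k ^ 4 + k ^ 3 - U ^ 2 * k| := by
  rw [← norm_pow, plateS_sq U k hr, ← plate_cast, Complex.norm_real, Real.norm_eq_abs]

lemma plateS_real (U k : ℝ) (hrpos : 0 ≤ k ^ 4 + k ^ 3 - U ^ 2 * k) :
    plateS U k = (((k ^ 4 + k ^ 3 - U ^ 2 * k) ^ ((1:ℝ)/2) : ℝ) : ℂ) := by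
  rw [plateS, ← plate_cast, Complex.ofReal_cpow hrpos]
  norm_num

lemma plate_omegaM_im (U k : ℝ) :
    (plateOmegaM U k).im = -(plateS U k).im / (1 + 1/k) := by
  rw [plateOmegaM, show (1 : ℂ) + 1/(k:ℂ) = ((1 + 1/k : ℝ) : ℂ) by push_cast; ring,
    Complex.div_ofReal_im]
  simp

lemma plate_omegaP_im (U k : ℝ) :
    (plateOmegaP U k).im = (plateS U k).im / (1 + 1/k) := by
  rw [plateOmegaP, show (1 : ℂ) + 1/(k:ℂ) = ((1 + 1/k : ℝ) : ℂ) by push_cast; ring,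
    Complex.div_ofReal_im]
  simp

lemma plate_exp_abs (w : ℂ) (t : ℝ) :
    ‖Complex.exp (-Complex.I * w * (t : ℂ))‖ = Real.exp (w.im * t) := by
  rw [Complex.norm_exp]
  congr 1
  simp [Complex.mul_re, Complex.mul_im]

lemma plate_identity (U k : ℝ) (hU : U ≠ 0) (hk : 0 < k)
    (hr : k ^ 4 + k ^ 3 - U ^ 2 * k ≠ 0) (Em Ep : ℂ) :
    plateCM U k * Em + plateCP U k * Ep =
      (Em + Ep) / 2 +
        ((U ^ 2 - k ^ 3 - k ^ 2 - U ^ 2 * k : ℝ) : ℂ) * (Em - Ep) / (4 * U * plateS U k) := by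
  set s := plateS U k with hs
  have hs2 := plateS_sq U k hr
  rw [← hs] at hs2
  have hs0 : s ≠ 0 := plateS_ne U k hr
  have hk0 : (k : ℂ) ≠ 0 := by exact_mod_cast ne_of_gt hk
  have hU0 : (U : ℂ) ≠ 0 := by exact_mod_cast hU
  have hk1 : (k : ℂ) + 1 ≠ 0 := by
    have : ((k + 1 : ℝ) : ℂ) = (k : ℂ) + 1 := by push_cast; ring
    rw [← this]
    exact_mod_cast ne_of_gt (by linarith : (0:ℝ) < k + 1)
  have hA : (1 : ℂ) + 1 / (k : ℂ) = ((k : ℂ) + 1) / (k : ℂ) := by field_simp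
  have hD : plateOmegaM U k ^ 2 - plateOmegaP U k ^ 2
      = -(4 * U * s) * (k:ℂ)^2 / ((k:ℂ) + 1) ^ 2 := by
    rw [plateOmegaM, plateOmegaP, ← hs, hA]
    field_simp
    ring
  have hZ : (4*(U:ℂ)*s*(k:ℂ)^2) ≠ 0 := by
    apply mul_ne_zero _ (pow_ne_zero _ hk0)
    exact mul_ne_zero (mul_ne_zero (by norm_num : (4:ℂ) ≠ 0) hU0) hs0
  have h4 : (4*(U:ℂ)*s) ≠ 0 :=
    mul_ne_zero (mul_ne_zero (by norm_num : (4:ℂ) ≠ 0) hU0) hs0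
  have hCM : plateCM U k
      = (((U:ℂ)+s)^2*(k:ℂ)^2 - (k:ℂ)^4*((k:ℂ)+1)^2) / (4*(U:ℂ)*s*(k:ℂ)^2) := by
    rw [plateCM, hD, plateOmegaP, ← hs, hA]
    field_simp
  have hCP : plateCP U k
      = -((((U:ℂ)-s)^2*(k:ℂ)^2 - (k:ℂ)^4*((k:ℂ)+1)^2) / (4*(U:ℂ)*s*(k:ℂ)^2)) := by
    rw [plateCP, hD, plateOmegaM, ← hs, hA]
    field_simp
  have hQ2 : ((U ^ 2 - k ^ 3 - k ^ 2 - U ^ 2 * k : ℝ) : ℂ) * (k:ℂ)^2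
      = (U:ℂ)^2*(k:ℂ)^2 + s^2*(k:ℂ)^2 - (k:ℂ)^4*((k:ℂ)+1)^2 := by
    push_cast
    linear_combination (-(k:ℂ)^2) * hs2
  rw [hCM, hCP]
  have hL : (((U:ℂ)+s)^2*(k:ℂ)^2 - (k:ℂ)^4*((k:ℂ)+1)^2) / (4*(U:ℂ)*s*(k:ℂ)^2) * Em
      + -((((U:ℂ)-s)^2*(k:ℂ)^2 - (k:ℂ)^4*((k:ℂ)+1)^2) / (4*(U:ℂ)*s*(k:ℂ)^2)) * Ep
      = ((((U:ℂ)+s)^2*(k:ℂ)^2 - (k:ℂ)^4*((k:ℂ)+1)^2) * Em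
          - (((U:ℂ)-s)^2*(k:ℂ)^2 - (k:ℂ)^4*((k:ℂ)+1)^2) * Ep) / (4*(U:ℂ)*s*(k:ℂ)^2) := by
    ring
  rw [hL, div_add_div _ _ (two_ne_zero) h4, div_eq_div_iff hZ (mul_ne_zero two_ne_zero h4)]
  linear_combination (-(8:ℂ)*(U:ℂ)*s*(Em-Ep)) * hQ2


set_option maxHeartbeats 1000000 in
/-- uniform polynomial bound `|c̃₋e^{−iω₋t} + c̃₊e^{−iω₊t}| ≤ C(1+k²)`
for all `k > 0` with `k⁴+k³−U²k ≠ 0`. -/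
theorem full_line_uniform_bound (U : ℝ) (hU : U ≠ 0) (t : ℝ) (ht : 0 ≤ t) :
    ∃ C : ℝ, 0 < C ∧ ∀ k : ℝ, 0 < k → k ^ 4 + k ^ 3 - U ^ 2 * k ≠ 0 →
      ‖plateCM U k * Complex.exp (-Complex.I * plateOmegaM U k * (t : ℂ))
          + plateCP U k * Complex.exp (-Complex.I * plateOmegaP U k * (t : ℂ))‖
        ≤ C * (1 + k ^ 2) := by
  have hUa : 0 < |U| := abs_pos.2 hU
  set K : ℝ := max 1 |U| with hK
  have hK1 : 1 ≤ K := le_max_left _ _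
  have hKU : |U| ≤ K := le_max_right _ _
  have hK0 : 0 < K := lt_of_lt_of_le one_pos hK1
  set R : ℝ := Real.sqrt (K^4 + K^3 + U^2*K) with hR
  have hR0 : 0 ≤ R := Real.sqrt_nonneg _
  set PK : ℝ := U^2 + K^3 + K^2 + U^2*K with hPK
  have hPK0 : 0 < PK := by positivity
  set M : ℝ := Real.exp ((|U| + R) * t) with hM
  have hM0 : 0 < M := Real.exp_pos _
  set C1 : ℝ := 1 + 2/|U| with hC1
  have hC10 : 0 < C1 := by positivity
  set C2 : ℝ := M + PK * M * t * Real.exp (2*R*t) / (2*|U|) + 1 with hC2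
  have hC20 : 0 < C2 := by positivity
  refine ⟨C1 + C2, by positivity, ?_⟩
  intro k hk hr
  have hk2 : (0:ℝ) < 1 + k^2 := by positivity
  set s := plateS U k with hs
  set σ := ‖s‖ with hσ
  have hs0 : s ≠ 0 := plateS_ne U k hr
  have hσ0 : 0 < σ := by rw [hσ]; exact norm_pos_iff.2 hs0
  have hσ2 : σ^2 = |k ^ 4 + k ^ 3 - U ^ 2 * k| := plate_absS_sq U k hr
  set Q : ℝ := U ^ 2 - k ^ 3 - k ^ 2 - U ^ 2 * k with hQ
  set Em := Complex.exp (-Complex.I * plateOmegaM U k * (t : ℂ)) with hEm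
  set Ep := Complex.exp (-Complex.I * plateOmegaP U k * (t : ℂ)) with hEp
  have hid := plate_identity U k hU hk hr Em Ep
  rw [hid]
  have h1k : (0:ℝ) < 1/k := by positivity
  have haR : (0:ℝ) < 1 + 1/k := by positivity
  have haR1 : (1:ℝ) ≤ 1 + 1/k := by linarith only [h1k]
  have hEmabs : ‖Em‖ = Real.exp (-(s.im) / (1 + 1/k) * t) := by
    rw [hEm, plate_exp_abs, plate_omegaM_im, hs]
  have hEpabs : ‖Ep‖ = Real.exp (s.im / (1 + 1/k) * t) := by
    rw [hEp, plate_exp_abs, plate_omegaP_im, hs]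
  have hsim : |s.im| ≤ σ := by rw [hσ]; exact Complex.abs_im_le_norm s
  have tri : ‖(Em + Ep) / 2 + (Q : ℂ) * (Em - Ep) / (4 * U * s)‖
      ≤ ‖Em + Ep‖ / 2 + |Q| * ‖Em - Ep‖ / (4 * |U| * σ) := by
    refine le_trans (norm_add_le _ _) (le_of_eq ?_)
    congr 1
    · simp [map_div₀]
    · rw [norm_div, norm_mul, norm_mul, norm_mul, Complex.norm_real, Complex.norm_real, hσ]
      norm_num
  refine le_trans tri ?_
  rcases le_or_gt K k with hKk | hkK
  · -- large k : everything real
    have hk1 : 1 ≤ k := le_trans hK1 hKk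
    have hU2 : U^2 ≤ k^2 := by
      nlinarith only [mul_self_le_mul_self (abs_nonneg U) (le_trans hKU hKk), sq_abs U]
    have hU2k : U^2*k ≤ k^3 := by
      nlinarith only [mul_le_mul_of_nonneg_right hU2 hk.le]
    have hrk : k^4 ≤ k ^ 4 + k ^ 3 - U ^ 2 * k := by linarith only [hU2k]
    have hrpos : (0:ℝ) < k ^ 4 + k ^ 3 - U ^ 2 * k := by
      linarith only [hrk, pow_pos hk 4]
    have him : s.im = 0 := by
      rw [hs, plateS_real U k hrpos.le]
      simp
    have hEm1 : ‖Em‖ = 1 := by rw [hEmabs, him]; simp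
    have hEp1 : ‖Ep‖ = 1 := by rw [hEpabs, him]; simp
    have hσk : k^2 ≤ σ := by
      have h4 : (k^2)^2 ≤ σ^2 := by
        rw [hσ2, abs_of_pos hrpos]
        linarith only [hrk]
      nlinarith only [h4, hσ0, sq_nonneg (σ - k^2), sq_nonneg (σ + k^2), pow_pos hk 2]
    have hk23 : k^2 ≤ k^3 := by
      nlinarith only [mul_nonneg (sq_nonneg k) (by linarith only [hk1] : (0:ℝ) ≤ k - 1)]
    have hU2k0 : (0:ℝ) ≤ U^2*k := by positivity
    have hk30 : (0:ℝ) < k^3 := pow_pos hk 3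
    have hQb : |Q| ≤ 4*k^3 := by
      rw [hQ, abs_le]
      constructor <;> linarith only [hk23, hU2k, hU2k0, hk30, hU2, sq_nonneg U]
    have hEmEp : ‖Em - Ep‖ ≤ 2 := by
      have h := norm_sub_le Em Ep
      rw [hEm1, hEp1] at h
      linarith only [h]
    have hsum : ‖Em + Ep‖ ≤ 2 := by
      have h := norm_add_le Em Ep
      rw [hEm1, hEp1] at h
      linarith only [h]
    have hterm2 : |Q| * ‖Em - Ep‖ / (4 * |U| * σ) ≤ (2/|U|) * k := by
      have h1 : |Q| * ‖Em - Ep‖ ≤ 4*k^3 * 2 :=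
        mul_le_mul hQb hEmEp (norm_nonneg _) (by positivity)
      have h2 : 4 * |U| * k^2 ≤ 4 * |U| * σ :=
        mul_le_mul_of_nonneg_left hσk (by positivity)
      calc |Q| * ‖Em - Ep‖ / (4 * |U| * σ)
          ≤ 4*k^3 * 2 / (4 * |U| * k^2) :=
            div_le_div₀ (by positivity) h1 (by positivity) h2
        _ = (2/|U|) * k := by
            field_simp
    calc ‖Em + Ep‖ / 2 + |Q| * ‖Em - Ep‖ / (4 * |U| * σ)
        ≤ 2/2 + (2/|U|) * k :=
          add_le_add ((div_le_div_iff_of_pos_right (by norm_num : (0:ℝ) < 2)).2 hsum) hterm2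
      _ ≤ C1 * (1 + k^2) := by
          rw [hC1]
          have hb : (0:ℝ) < 2/|U| := by positivity
          nlinarith only [mul_nonneg hb.le (sq_nonneg (k-1)), mul_nonneg hb.le hk.le,
            sq_nonneg k, hb]
      _ ≤ (C1 + C2) * (1 + k^2) := by nlinarith only [mul_pos hC20 hk2]
  · -- small k
    have hk3K : k^3 ≤ K^3 := pow_le_pow_left₀ hk.le hkK.le 3
    have hk4K : k^4 ≤ K^4 := pow_le_pow_left₀ hk.le hkK.le 4
    have hk2K : k^2 ≤ K^2 := pow_le_pow_left₀ hk.le hkK.le 2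
    have hU2K : U^2*k ≤ U^2*K := mul_le_mul_of_nonneg_left hkK.le (sq_nonneg U)
    have hU2k0 : (0:ℝ) ≤ U^2*k := by positivity
    have hσR : σ ≤ R := by
      have h1 : σ^2 ≤ K^4 + K^3 + U^2*K := by
        rw [hσ2]
        have habs : |k ^ 4 + k ^ 3 - U ^ 2 * k| ≤ k^4 + k^3 + U^2*k := by
          rw [abs_le]
          constructor <;> linarith only [hU2k0, pow_pos hk 4, pow_pos hk 3]
        linarith only [habs, hk3K, hk4K, hU2K]
      rw [hR, show σ = Real.sqrt (σ^2) by rw [Real.sqrt_sq hσ0.le]]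
      exact Real.sqrt_le_sqrt h1
    have himb : ∀ x : ℝ, |x| ≤ σ → Real.exp (x / (1 + 1/k) * t) ≤ M := by
      intro x hx
      rw [hM]
      apply Real.exp_le_exp.2
      have h1 : x / (1 + 1/k) ≤ |x| := by
        rw [div_le_iff₀ haR]
        exact le_trans (le_abs_self x) (le_mul_of_one_le_right (abs_nonneg x) haR1)
      have h2 : x / (1 + 1/k) ≤ |U| + R :=
        le_trans h1 (le_trans hx (le_trans hσR (by linarith only [hUa])))
      exact mul_le_mul_of_nonneg_right h2 ht
    have hEmM : ‖Em‖ ≤ M := by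
      rw [hEmabs]
      exact himb _ (by rw [abs_neg]; exact hsim)
    have hEpM : ‖Ep‖ ≤ M := by
      rw [hEpabs]
      exact himb _ hsim
    have hk1c : (k : ℂ) + 1 ≠ 0 := by
      have h : ((k + 1 : ℝ) : ℂ) = (k : ℂ) + 1 := by push_cast; ring
      rw [← h]
      exact_mod_cast ne_of_gt (by linarith only [hk] : (0:ℝ) < k + 1)
    have hk0c : (k : ℂ) ≠ 0 := by exact_mod_cast ne_of_gt hk
    set z : ℂ := 2 * Complex.I * s * ((t * (k/(k+1)) : ℝ) : ℂ) with hz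
    have hEmz : Em = Ep * Complex.exp z := by
      rw [hEm, hEp, ← Complex.exp_add]
      congr 1
      rw [plateOmegaM, plateOmegaP, ← hs, hz]
      push_cast
      field_simp
      ring
    have hkfrac : 0 ≤ t * (k/(k+1)) := by positivity
    have hkfrac1 : k/(k+1) ≤ 1 := by
      rw [div_le_one (by linarith only [hk])]
      linarith only []
    have hzabs : ‖z‖ = 2 * σ * (t * (k/(k+1))) := by
      rw [hz, norm_mul, norm_mul, norm_mul, Complex.norm_I, Complex.norm_real, Real.norm_eq_abs,
        Complex.norm_two,
        abs_of_nonneg hkfrac, hσ]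
      ring
    have hzle : ‖z‖ ≤ 2 * σ * t := by
      rw [hzabs]
      have h1 : t * (k/(k+1)) ≤ t * 1 := mul_le_mul_of_nonneg_left hkfrac1 ht
      have h2 : t * (k/(k+1)) ≤ t := by linarith only [h1]
      exact mul_le_mul_of_nonneg_left h2 (by positivity)
    have hzleR : ‖z‖ ≤ 2 * R * t := by
      refine le_trans hzle ?_
      exact mul_le_mul_of_nonneg_right (by linarith only [hσR] : 2*σ ≤ 2*R) ht
    have hdiff : ‖Em - Ep‖ ≤ M * (2 * σ * t * Real.exp (2*R*t)) := by
      have h1 : Em - Ep = Ep * (Complex.exp z - 1) := by rw [hEmz]; ring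
      rw [h1, norm_mul]
      have h2 : ‖Complex.exp z - 1‖ ≤ 2 * σ * t * Real.exp (2*R*t) := by
        refine le_trans (exp_sub_one_bound z) ?_
        exact mul_le_mul hzle (Real.exp_le_exp.2 hzleR) (Real.exp_pos _).le (by positivity)
      exact mul_le_mul hEpM h2 (norm_nonneg _) hM0.le
    have hQb : |Q| ≤ PK := by
      rw [hQ, hPK, abs_le]
      constructor <;>
        nlinarith only [sq_nonneg U, hk3K, hk2K, hU2K, pow_pos hk 3, pow_pos hk 2,
          hU2k0, pow_pos hK0 3, pow_pos hK0 2, mul_nonneg (sq_nonneg U) hK0.le]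
    have hterm2 : |Q| * ‖Em - Ep‖ / (4 * |U| * σ)
        ≤ PK * M * t * Real.exp (2*R*t) / (2*|U|) := by
      have h1 : |Q| * ‖Em - Ep‖ ≤ PK * (M * (2 * σ * t * Real.exp (2*R*t))) :=
        mul_le_mul hQb hdiff (norm_nonneg _) hPK0.le
      calc |Q| * ‖Em - Ep‖ / (4 * |U| * σ)
          ≤ PK * (M * (2 * σ * t * Real.exp (2*R*t))) / (4 * |U| * σ) :=
            (div_le_div_iff_of_pos_right (by positivity)).2 h1
        _ = PK * M * t * Real.exp (2*R*t) / (2*|U|) := by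
            field_simp
            ring
    calc ‖Em + Ep‖ / 2 + |Q| * ‖Em - Ep‖ / (4 * |U| * σ)
        ≤ (M + M)/2 + PK * M * t * Real.exp (2*R*t) / (2*|U|) := by
          refine add_le_add ((div_le_div_iff_of_pos_right (by norm_num : (0:ℝ) < 2)).2 ?_) hterm2
          exact le_trans (norm_add_le _ _) (add_le_add hEmM hEpM)
      _ ≤ C2 := by rw [hC2]; linarith only []
      _ ≤ C2 * (1 + k^2) := by nlinarith only [mul_nonneg hC20.le (sq_nonneg k), hC20]
      _ ≤ (C1 + C2) * (1 + k^2) := by nlinarith only [mul_pos hC10 hk2]
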